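/- For all natural numbers k and i with i ≤ k, the 2-adic valuation of the binomial coefficient C(k,i) satisfies ν(C(k,i)) ≤ lg(k+1) − ν(k+1). -/

import Mathlib

/-- Inequality (1.1): ν(C(k,i)) ≤ lg(k+1) − ν(k+1) for i ≤ k. -/
theorem stmt_6 (k i : ℕ) (h : i ≤ k) :
    (padicValNat 2 (k.choose i) : ℤ) ≤
      (Nat.log 2 (k + 1) : ℤ) - (padicValNat 2 (k + 1) : ℤ) := by
  have hp : Nat.Prime 2 := Nat.prime_two
  haveI : Fact (Nat.Prime 2) := ⟨hp⟩
  set L := Nat.log 2 (k + 1) with hL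
  set a := padicValNat 2 (i + 1) with ha
  -- a ≤ L
  have haL : a ≤ L := by
    have h1 : 2 ^ a ∣ i + 1 := pow_padicValNat_dvd
    have h2 : 2 ^ a ≤ k + 1 := le_trans (Nat.le_of_dvd (by omega) h1) (by omega)
    exact Nat.le_log_of_pow_le one_lt_two h2
  -- identity: (k+1) * C(k,i) = C(k+1,i+1) * (i+1)
  have hid : (k + 1) * k.choose i = (k + 1).choose (i + 1) * (i + 1) :=
    Nat.add_one_mul_choose_eq k i
  have hc0 : 0 < k.choose i := Nat.choose_pos h
  have hc0' : 0 < (k + 1).choose (i + 1) := Nat.choose_pos (by omega)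
  -- valuations split
  have hval : padicValNat 2 (k + 1) + padicValNat 2 (k.choose i)
      = padicValNat 2 ((k + 1).choose (i + 1)) + a := by
    rw [← padicValNat.mul (by omega) (by omega), hid,
      padicValNat.mul (by omega) (by omega)]
  -- Kummer bound: ν(C(k+1,i+1)) ≤ L - a
  have hkummer : padicValNat 2 ((k + 1).choose (i + 1)) ≤ L - a := by
    have hmult := hp.emultiplicity_choose (n := k + 1) (k := i + 1) (b := L + 1)
      (by omega) (Nat.lt_succ_self _)
    have hval2 : (padicValNat 2 ((k + 1).choose (i + 1)) : ℕ∞)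
        = emultiplicity 2 ((k + 1).choose (i + 1)) :=
      padicValNat_eq_emultiplicity hc0'.ne'
    rw [← Nat.cast_le (α := ℕ∞), hval2, hmult, Nat.cast_le]
    calc ({x ∈ Finset.Ico 1 (L + 1) |
          2 ^ x ≤ (i + 1) % 2 ^ x + (k + 1 - (i + 1)) % 2 ^ x} : Finset ℕ).card
        ≤ (Finset.Ico (a + 1) (L + 1)).card := by
          apply Finset.card_le_card
          intro x hx
          simp only [Finset.mem_filter, Finset.mem_Ico] at hx ⊢
          obtain ⟨⟨hx1, hx2⟩, hx3⟩ := hx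
          refine ⟨?_, hx2⟩
          by_contra hcon
          push_neg at hcon
          have hxa : x ≤ a := by omega
          have hdvd : 2 ^ x ∣ i + 1 :=
            dvd_trans (pow_dvd_pow 2 hxa) pow_padicValNat_dvd
          have hmod : (i + 1) % 2 ^ x = 0 := Nat.mod_eq_zero_of_dvd hdvd
          have hlt : (k + 1 - (i + 1)) % 2 ^ x < 2 ^ x :=
            Nat.mod_lt _ (Nat.pow_pos (n := x) (by norm_num))
          omega
      _ = L - a := by rw [Nat.card_Ico]; omega
  have : padicValNat 2 (k.choose i) + padicValNat 2 (k + 1) ≤ L := by omega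
  omega
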